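/- Let p be a prime and S a nonzero commutative F_p-algebra whose only idempotents are 0 and 1. Then the set {x ∈ S : x^p = x} of Frobenius-fixed elements equals the image of the prime field F_p in S (i.e. the set {0, 1, 2, ..., p-1}·1_S). -/

import Mathlib

open Polynomial

lemma AS_poly_key (p : ℕ) [Fact p.Prime] :
    (X ^ p - X : (ZMod p)[X]) = ∏ i : ZMod p, (X - C i) := by
  have hp : 1 < p := (Fact.out : p.Prime).one_lt
  have hcard : Fintype.card (ZMod p) = p := ZMod.card p
  have hroots : (X ^ p - X : (ZMod p)[X]).roots = Finset.univ.val := by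
    have := FiniteField.roots_X_pow_card_sub_X (ZMod p)
    rwa [hcard] at this
  have hmonic : (X ^ p - X : (ZMod p)[X]).Monic := by
    have heq : (X ^ p - X : (ZMod p)[X]) = X ^ p + (-X) := by ring
    rw [heq]
    refine (monic_X_pow p).add_of_left ?_
    rw [degree_neg, degree_X, degree_X_pow]
    exact_mod_cast hp
  have hdeg : (X ^ p - X : (ZMod p)[X]).natDegree = p :=
    FiniteField.X_pow_card_sub_X_natDegree_eq (ZMod p) hp
  have hsplits : Splits (X ^ p - X : (ZMod p)[X]) := by
    rw [splits_iff_card_roots, hroots, hdeg]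
    simp [hcard]
  have := hsplits.eq_prod_roots_of_monic hmonic
  rw [this, hroots]
  rfl

theorem stmt_8 (p : ℕ) [Fact p.Prime] (S : Type*) [CommRing S] [CharP S p] [Nontrivial S]
    (hidem : ∀ e : S, IsIdempotentElem e → e = 0 ∨ e = 1) :
    {x : S | x ^ p = x} = Set.range (ZMod.castHom (dvd_refl p) S) := by
  have hp : 1 < p := (Fact.out : p.Prime).one_lt
  letI : Algebra (ZMod p) S := (ZMod.castHom (dvd_refl p) S).toAlgebra
  have halg : ∀ i : ZMod p, algebraMap (ZMod p) S i = ZMod.castHom (dvd_refl p) S i :=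
    fun i => rfl
  ext x
  simp only [Set.mem_setOf_eq, Set.mem_range]
  constructor
  · intro hx
    -- key product identity
    have hprod : ∏ i : ZMod p, (x - algebraMap (ZMod p) S i) = 0 := by
      have := congrArg (aeval x) (AS_poly_key p)
      simp only [map_sub, map_pow, aeval_X, map_prod, aeval_C] at this
      rw [← this, hx, sub_self]
    -- each x - i satisfies y^p = y
    have hy : ∀ i : ZMod p, (x - algebraMap (ZMod p) S i) ^ p = x - algebraMap (ZMod p) S i := by
      intro i
      have hfrob : (x - algebraMap (ZMod p) S i) ^ p = x ^ p - (algebraMap (ZMod p) S i) ^ p := by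
        haveI : ExpChar S p := ExpChar.prime (Fact.out : p.Prime)
        exact sub_pow_expChar _ _
      rw [hfrob, hx, ← map_pow, ZMod.pow_card]
    -- idempotents
    have hidemp : ∀ i : ZMod p, IsIdempotentElem ((x - algebraMap (ZMod p) S i) ^ (p - 1)) := by
      intro i
      set y := x - algebraMap (ZMod p) S i with hydef
      unfold IsIdempotentElem
      have : y ^ (p - 1) * y ^ (p - 1) = y ^ p * y ^ (p - 2) := by
        rw [← pow_add, ← pow_add]; congr 1; omega
      rw [this, hy i, ← pow_succ']
      congr 1; omega
    by_cases hzero : ∃ i : ZMod p, (x - algebraMap (ZMod p) S i) ^ (p - 1) = 0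
    · obtain ⟨i, hi⟩ := hzero
      refine ⟨i, ?_⟩
      have : x - algebraMap (ZMod p) S i = 0 := by
        have h1 : (x - algebraMap (ZMod p) S i) ^ p
            = (x - algebraMap (ZMod p) S i) ^ (p - 1) * (x - algebraMap (ZMod p) S i) := by
          rw [← pow_succ]; congr 1; omega
        have := hy i
        rw [h1, hi, zero_mul] at this
        exact this.symm
      exact (sub_eq_zero.mp this).symm
    · exfalso
      push_neg at hzero
      have hone : ∀ i : ZMod p, (x - algebraMap (ZMod p) S i) ^ (p - 1) = 1 := by
        intro i
        rcases hidem _ (hidemp i) with h | h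
        · exact absurd h (hzero i)
        · exact h
      have : (∏ i : ZMod p, (x - algebraMap (ZMod p) S i)) ^ (p - 1) = 1 := by
        rw [← Finset.prod_pow]
        simp [hone]
      rw [hprod, zero_pow (by omega : p - 1 ≠ 0)] at this
      exact zero_ne_one this
  · rintro ⟨i, rfl⟩
    rw [← map_pow, ZMod.pow_card]
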